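/- As formal power series, the square of the Jacobi theta function θ(q) = ∑_{n∈Z} q^{n^2} equals the eta quotient η(q^2)^{10}/(η(q)^4 η(q^4)^4): that is, (∑_{n∈Z} q^{n^2})^2 = ∏_{n≥1} (1−q^{2n})^{10} / (∏_{n≥1}(1−q^n)^4 ∏_{n≥1}(1−q^{4n})^4). -/

import Mathlib

open PowerSeries

/-- The formal power series `∏_{n ≥ 1} (1 - q^(δ*n))` over `ℚ` (the Dedekind eta function
at `q^δ`, without its fractional power of `q`). -/
noncomputable def etaQ (δ : ℕ) : PowerSeries ℚ :=
  PowerSeries.mk fun m => PowerSeries.coeff m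
    (∏ n ∈ Finset.range (m + 1), (1 - PowerSeries.X ^ (δ * (n + 1))))

/-- The Jacobi theta function `θ(q) = ∑_{n ∈ ℤ} q^(n²)` as a formal power series: the
coefficient of `q^m` is the number of integers `n` with `n² = m`. -/
noncomputable def theta : PowerSeries ℚ :=
  PowerSeries.mk fun m => (Set.ncard {n : ℤ | n ^ 2 = (m : ℤ)} : ℚ)

noncomputable section AuxTheta
open Finset

abbrev R := PowerSeries ℚ

/-- |k - N|^2 in ℕ. -/
def dsq (k N : ℕ) : ℕ := (k - N + (N - k))^2

lemma dsq_cast (k N : ℕ) : (dsq k N : ℤ) = ((k : ℤ) - N)^2 := by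
  rcases le_total k N with h | h
  · have : k - N = 0 := Nat.sub_eq_zero_of_le h
    rw [dsq, this]
    push_cast [h]
    ring
  · have : N - k = 0 := Nat.sub_eq_zero_of_le h
    rw [dsq, this]
    push_cast [h]
    ring

/-- Gaussian binomial coefficients in base q². -/
def G : ℕ → ℕ → R
  | 0, 0 => 1
  | 0, _ + 1 => 0
  | _ + 1, 0 => 1
  | m + 1, k + 1 => X ^ (2 * (m - k)) * G m k + G m (k + 1)

lemma G_zero_right (m : ℕ) : G m 0 = 1 := by cases m <;> rfl

lemma G_eq_zero (m k : ℕ) (h : m < k) : G m k = 0 := by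
  induction m generalizing k with
  | zero => obtain ⟨k, rfl⟩ := Nat.exists_eq_add_of_lt h; rw [show 0 + k + 1 = k + 1 by omega]; rfl
  | succ m ih =>
    obtain ⟨j, rfl⟩ := Nat.exists_eq_add_of_lt h
    rw [show m + 1 + j + 1 = (m + 1 + j) + 1 by omega]
    show X ^ (2 * (m - (m + 1 + j))) * G m (m + 1 + j) + G m (m + 1 + j + 1) = 0
    rw [ih _ (by omega), ih _ (by omega), mul_zero, zero_add]

lemma G_ruleA (m k : ℕ) : G (m + 1) (k + 1) = X ^ (2 * (m - k)) * G m k + G m (k + 1) := rfl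

lemma G_one (m : ℕ) : G m 1 = ∑ i ∈ range m, X ^ (2 * i) := by
  induction m with
  | zero => simp [G]
  | succ m ih =>
    rw [show (m + 1 : ℕ) = m + 0 + 1 from rfl, G_ruleA, G_zero_right, mul_one, ih,
      Finset.sum_range_succ, Nat.sub_zero]
    ring

lemma G_ruleB (m k : ℕ) : G (m + 1) (k + 1) = X ^ (2 * (k + 1)) * G m (k + 1) + G m k := by
  induction m generalizing k with
  | zero =>
    rcases k with _ | k
    · simp [G]
    · rw [G_ruleA, G_eq_zero 0 (k+1) (by omega), G_eq_zero 0 (k+1+1) (by omega)]; ring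
  | succ m ih =>
    rcases k with _ | k
    · rw [G_zero_right, G_one, G_one, Finset.mul_sum, Finset.sum_range_succ',
        Finset.sum_congr rfl (fun i (_ : i ∈ range (m+1)) =>
          show X ^ (2 * (i + 1)) = X ^ 2 * X ^ (2 * i) by ring)]
      norm_num
    · have h1 := G_ruleA (m + 1) (k + 1)
      have h2 := ih k
      have h3 := ih (k + 1)
      have h4 := G_ruleA m (k + 1)
      have h5 := G_ruleA m k
      conv_lhs => rw [h1, h2, h3]
      conv_rhs => rw [h4, h5]
      rcases le_or_gt (k + 1) m with h | h
      · rw [show m - k = (m - (k+1)) + 1 by omega, show m + 1 - (k + 1) = (m - (k+1)) + 1 by omega]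
        ring
      · rw [G_eq_zero m (k+1) (by omega), G_eq_zero m (k+2) (by omega),
          show m + 1 - (k + 1) = m - k by omega]
        ring

lemma G_diag (m : ℕ) : G m m = 1 := by
  induction m with
  | zero => rfl
  | succ m ih => rw [G_ruleA, ih, G_eq_zero m (m+1) (by omega), Nat.sub_self]; ring

def Ef (δ N : ℕ) : R := ∏ n ∈ range N, (1 - X ^ (δ * (n + 1)))

lemma Ef_succ (δ N : ℕ) : Ef δ (N + 1) = Ef δ N * (1 - X ^ (δ * (N + 1))) :=
  Finset.prod_range_succ _ _

lemma Ef_zero (δ : ℕ) : Ef δ 0 = 1 := rfl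

lemma prodFormula : ∀ m k, k ≤ m → Ef 2 k * Ef 2 (m - k) * G m k = Ef 2 m := by
  intro m
  induction m with
  | zero =>
    intro k hk
    interval_cases k
    simp [Ef_zero, G]
  | succ m ih =>
    intro k hk
    rcases k with _ | k
    · simp [Ef_zero, G_zero_right]
    · rcases Nat.lt_or_ge k m with h | h
      · obtain ⟨a, rfl⟩ := Nat.exists_eq_add_of_lt h
        have i1 := ih k (by omega)
        have i2 := ih (k + 1) (by omega)
        rw [show k + a + 1 - k = a + 1 by omega, Ef_succ 2 a] at i1
        rw [show k + a + 1 - (k + 1) = a by omega, Ef_succ 2 k] at i2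
        rw [G_ruleA, show k + a + 1 - k = a + 1 by omega,
          show k + a + 1 + 1 - (k + 1) = a + 1 by omega, Ef_succ 2 a, Ef_succ 2 k,
          Ef_succ 2 (k + a + 1)]
        linear_combination (X : R) ^ (2*(a+1)) * (1 - X ^ (2*(k+1))) * i1
          + (1 - X ^ (2*(a+1))) * i2
      · have hk' : k = m := by omega
        subst hk'
        rw [Nat.sub_self, Ef_zero, G_diag]
        ring

lemma triplePascal (m k : ℕ) :
    G (m+2) (k+2) = X ^ (2*(k+2)) * G m (k+2) + (1 + X ^ (2*(m+1))) * G m (k+1)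
      + X ^ (2*(m-k)) * G m k := by
  rw [G_ruleB (m+1) (k+1), G_ruleA m (k+1), G_ruleA m k]
  rcases le_or_gt (k+1) m with h | h
  · obtain ⟨a, rfl⟩ := Nat.exists_eq_add_of_le h
    rw [show k+1+a - (k+1) = a by omega, show k+1+a - k = a+1 by omega]
    ring
  · rw [G_eq_zero m (k+1) h, G_eq_zero m (k+2) (by omega)]
    ring

lemma dsq_zero (N : ℕ) : dsq 0 N = N^2 := by simp [dsq]

lemma dsq_one_succ (N : ℕ) : dsq 1 (N+1) = N^2 := by
  have h1 : 1 - (N+1) = 0 := by omega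
  have h2 : N + 1 - 1 = N := by omega
  rw [dsq, h1, h2, zero_add]

lemma dsq_e1 (k N : ℕ) : 2*(k+2) + dsq (k+1) N = dsq (k+2) N + (2*N+1) := by
  have h1 := dsq_cast (k+1) N
  have h2 := dsq_cast (k+2) N
  have : (2*(k+2) + dsq (k+1) N : ℤ) = (dsq (k+2) N + (2*N+1) : ℤ) := by
    rw [h1, h2]; push_cast; ring
  exact_mod_cast this

lemma dsq_e2 (k N : ℕ) : dsq (k+2) (N+1) = dsq (k+1) N := by
  have : ((dsq (k+2) (N+1) : ℤ)) = (dsq (k+1) N : ℤ) := by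
    rw [dsq_cast, dsq_cast]; push_cast; ring
  exact_mod_cast this

lemma dsq_e3 (k N : ℕ) (hk : k ≤ 2*N) :
    2*(2*N - k) + dsq (k+1) N = dsq k N + (2*N+1) := by
  have h1 := dsq_cast (k+1) N
  have h2 := dsq_cast k N
  have : (2*((2*N : ℤ) - k) + dsq (k+1) N : ℤ) = (dsq k N + (2*N+1) : ℤ) := by
    rw [h1, h2]; push_cast; ring
  have hc : ((2*N - k : ℕ) : ℤ) = (2*N : ℤ) - k := by omega
  zify [hk]
  rw [h1, h2]
  push_cast
  ring

def Fplus (N : ℕ) : R := ∏ n ∈ range N, (1 + X ^ (2 * n + 1))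

def SS (N : ℕ) : R := ∑ k ∈ range (2 * N + 1), G (2 * N) k * X ^ (dsq k N)

lemma SS_step (N : ℕ) : SS (N + 1) = (1 + X ^ (2*N+1)) ^ 2 * SS N := by
  set g : ℕ → R := fun k => G (2*N) k * X ^ (dsq k N) with hg
  -- auxiliary sums
  have gtop1 : g (2*N+1) = 0 := by
    simp only [hg]; rw [G_eq_zero (2*N) (2*N+1) (by omega), zero_mul]
  have gtop2 : g (2*N+2) = 0 := by
    simp only [hg]; rw [G_eq_zero (2*N) (2*N+2) (by omega), zero_mul]
  have hSS : SS N = ∑ k ∈ range (2*N+1), g k := rfl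
  have shift1 : ∑ k ∈ range (2*N+1), g (k+1) = SS N - g 0 := by
    have h1 := Finset.sum_range_succ' g (2*N+1)
    have h2 := Finset.sum_range_succ g (2*N+1)
    rw [gtop1, add_zero, ← hSS] at h2
    rw [h1] at h2
    linear_combination h2
  have shift2 : ∑ k ∈ range (2*N+1), g (k+2) = SS N - g 0 - g 1 := by
    have h1 := Finset.sum_range_succ' g (2*N+2)
    have h1' := Finset.sum_range_succ' (fun i => g (i+1)) (2*N+1)
    have h2 := Finset.sum_range_succ g (2*N+2)
    have h3 := Finset.sum_range_succ g (2*N+1)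
    rw [gtop2, add_zero] at h2
    rw [gtop1, add_zero, ← hSS] at h3
    rw [h3] at h2
    rw [h1', h2] at h1
    have he : ∀ i : ℕ, g (i + 1 + 1) = g (i + 2) := fun i => rfl
    simp only [he, Nat.zero_add] at h1
    linear_combination -h1
  -- expand SS (N+1)
  have expand : SS (N+1) = ∑ k ∈ range (2*N+1),
      (fun k => G (2*N+2) k * X ^ (dsq k (N+1))) (k+2)
      + G (2*N+2) 1 * X ^ (dsq 1 (N+1)) + G (2*N+2) 0 * X ^ (dsq 0 (N+1)) := by
    rw [SS, show 2*(N+1) = (2*N+1)+1 by ring, show (2*N+1)+1+1 = ((2*N+1)+1)+1 from rfl]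
    rw [Finset.sum_range_succ' (fun k => G ((2*N+1)+1) k * X ^ (dsq k (N+1))) ((2*N+1)+1)]
    rw [Finset.sum_range_succ' (fun i => G ((2*N+1)+1) (i+1) * X ^ (dsq (i+1) (N+1))) (2*N+1)]
  -- pointwise rewriting of the shifted summand
  have point : ∀ k ∈ range (2*N+1),
      G (2*N+2) (k+2) * X ^ (dsq (k+2) (N+1))
        = g (k+2) * X ^ (2*N+1) + (1 + X ^ (2*(2*N+1))) * g (k+1) + g k * X ^ (2*N+1) := by
    intro k hk
    have hk' : k ≤ 2*N := by
      have := Finset.mem_range.mp hk; omega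
    have tp := triplePascal (2*N) k
    rw [dsq_e2 k N, tp]
    simp only [hg]
    have h1 : (X : R) ^ (2*(k+2)) * X ^ (dsq (k+1) N) = X ^ (dsq (k+2) N) * X ^ (2*N+1) := by
      rw [← pow_add, ← pow_add, dsq_e1]
    have h3 : (X : R) ^ (2*(2*N-k)) * X ^ (dsq (k+1) N) = X ^ (dsq k N) * X ^ (2*N+1) := by
      rw [← pow_add, ← pow_add, dsq_e3 k N hk']
    linear_combination G (2*N) (k+2) * h1 + G (2*N) k * h3
  rw [expand, Finset.sum_congr rfl point]
  have splitsum : ∑ k ∈ range (2*N+1),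
      (g (k+2) * X ^ (2*N+1) + (1 + X ^ (2*(2*N+1))) * g (k+1) + g k * X ^ (2*N+1))
      = (∑ k ∈ range (2*N+1), g (k+2)) * X ^ (2*N+1)
        + (1 + X ^ (2*(2*N+1))) * (∑ k ∈ range (2*N+1), g (k+1))
        + (∑ k ∈ range (2*N+1), g k) * X ^ (2*N+1) := by
    rw [Finset.sum_add_distrib, Finset.sum_add_distrib, ← Finset.sum_mul, ← Finset.mul_sum,
      ← Finset.sum_mul]
  rw [splitsum, shift1, shift2, ← hSS, G_zero_right, one_mul, dsq_zero, dsq_one_succ]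
  -- residual identity
  have hg0 : g 0 = X ^ (N^2) := by simp only [hg]; rw [G_zero_right, one_mul, dsq_zero]
  have hg1 : g 1 * X ^ (2*N+1) = G (2*N) 1 * X ^ (N^2+2) := by
    simp only [hg]
    rw [mul_assoc, ← pow_add]
    congr 2
    have h1 := dsq_cast 1 N
    have : ((dsq 1 N + (2*N+1) : ℕ) : ℤ) = ((N^2 + 2 : ℕ) : ℤ) := by
      push_cast [h1]; ring
    exact_mod_cast this
  have residual : G (2*N+2) 1 * X ^ (N^2) + X ^ ((N+1)^2)
      = X ^ (N^2) * X ^ (2*N+1) + G (2*N) 1 * X ^ (N^2+2) + (1 + X ^ (2*(2*N+1))) * X ^ (N^2) := by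
    rw [G_one, G_one, Finset.sum_mul, Finset.sum_mul,
      Finset.sum_range_succ (fun i => (X:R) ^ (2*i) * X ^ (N^2)) (2*N+1),
      Finset.sum_range_succ' (fun i => (X:R) ^ (2*i) * X ^ (N^2)) (2*N)]
    have e1 : ∀ i ∈ range (2*N), (X:R) ^ (2*(i+1)) * X ^ (N^2) = X ^ (2*i) * X ^ (N^2+2) := by
      intro i _
      rw [← pow_add, ← pow_add]
      congr 1
      ring
    rw [Finset.sum_congr rfl e1]
    rw [show (N+1)^2 = N^2 + (2*N+1) by ring, pow_add]
    ring
  linear_combination residual - ((X:R)^(2*N+1) + 1 + X^(2*(2*N+1))) * hg0 - hg1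

lemma Fplus_sq (N : ℕ) : Fplus N ^ 2 = SS N := by
  induction N with
  | zero =>
    rw [Fplus, SS]
    norm_num [G_zero_right, dsq]
  | succ N ih =>
    rw [SS_step, ← ih, Fplus, Finset.prod_range_succ, ← Fplus]
    ring

lemma mod_mul {s : ℕ} {P P' Q Q' : R} (h : X^s ∣ P - P') (h' : X^s ∣ Q - Q') :
    X^s ∣ P*Q - P'*Q' := by
  have e : P*Q - P'*Q' = P*(Q - Q') + (P - P')*Q' := by ring
  rw [e]
  exact dvd_add (h'.mul_left P) (h.mul_right Q')

lemma Ef_stab (δ : ℕ) (hδ : 1 ≤ δ) {M M' : ℕ} (h : M ≤ M') :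
    X^(M+1) ∣ Ef δ M' - Ef δ M := by
  induction M', h using Nat.le_induction with
  | base => simp
  | succ n hn ih =>
    rw [Ef_succ]
    have e : Ef δ n * (1 - X ^ (δ * (n+1))) - Ef δ M
        = (Ef δ n - Ef δ M) - Ef δ n * X ^ (δ * (n+1)) := by ring
    rw [e]
    apply dvd_sub ih
    apply Dvd.dvd.mul_left _ (Ef δ n)
    apply pow_dvd_pow
    have := Nat.le_mul_of_pos_left (n+1) (by omega : 0 < δ)
    omega

lemma Ef_stab' (δ : ℕ) (hδ : 1 ≤ δ) {s M M' : ℕ} (hs : s ≤ M + 1) (h : M ≤ M') :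
    X^s ∣ Ef δ M' - Ef δ M :=
  dvd_trans (pow_dvd_pow X hs) (Ef_stab δ hδ h)

lemma Ef_const (δ N : ℕ) (hδ : 1 ≤ δ) : constantCoeff (Ef δ N) = 1 := by
  rw [Ef, map_prod]
  apply Finset.prod_eq_one
  intro n _
  rw [map_sub, map_one, map_pow, constantCoeff_X, zero_pow (by positivity), sub_zero]

lemma mod_cancel {s : ℕ} {U P Q : R} (hU : constantCoeff U ≠ 0)
    (h : X^s ∣ U*P - U*Q) : X^s ∣ P - Q := by
  have hUU : U * U⁻¹ = 1 := PowerSeries.mul_inv_cancel U hU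
  have e : P - Q = U⁻¹ * (U * P - U * Q) := by
    rw [mul_sub, ← mul_assoc, ← mul_assoc, mul_comm U⁻¹ U, hUU, one_mul, one_mul]
  rw [e]
  exact h.mul_left _

lemma key_cong (m N k : ℕ) (hN : m + 1 ≤ N) (hk : k ≤ 2*N) (hd : dsq k N ≤ m) :
    X ^ (m + 1 - dsq k N) ∣ 1 - Ef 2 N * G (2*N) k := by
  have hb : (k - N) + (N - k) ≤ dsq k N := by
    rw [dsq]
    exact Nat.le_self_pow two_ne_zero _
  set d := dsq k N with hdd
  set s := m + 1 - d with hs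
  have hsk : s ≤ k := by omega
  have hsk2 : s ≤ 2*N - k := by omega
  have hsN : s ≤ N := by omega
  have hs2N : s ≤ 2*N := by omega
  have c1 : X^s ∣ Ef 2 k - Ef 2 s := Ef_stab' 2 (by omega) (by omega) hsk
  have c2 : X^s ∣ Ef 2 (2*N - k) - Ef 2 s := Ef_stab' 2 (by omega) (by omega) hsk2
  have c3 : X^s ∣ Ef 2 (2*N) - Ef 2 s := Ef_stab' 2 (by omega) (by omega) hs2N
  have c4 : X^s ∣ Ef 2 N - Ef 2 s := Ef_stab' 2 (by omega) (by omega) hsN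
  have pf := prodFormula (2*N) k hk
  have step1 : X^s ∣ Ef 2 s * (Ef 2 s * G (2*N) k) - Ef 2 s * 1 := by
    have h1 : X^s ∣ (Ef 2 k * Ef 2 (2*N - k)) * G (2*N) k
        - (Ef 2 s * Ef 2 s) * G (2*N) k := mod_mul (mod_mul c1 c2) (dvd_sub_comm.mp (by simp))
    rw [pf] at h1
    have h2 : X^s ∣ Ef 2 s - Ef 2 (2*N) := (dvd_sub_comm).mp c3
    have := dvd_add h1 h2
    have e : Ef 2 (2*N) - Ef 2 s * Ef 2 s * G (2*N) k + (Ef 2 s - Ef 2 (2*N))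
        = Ef 2 s * 1 - Ef 2 s * (Ef 2 s * G (2*N) k) := by ring
    rw [e] at this
    exact dvd_sub_comm.mp this
  have step2 : X^s ∣ Ef 2 s * G (2*N) k - 1 :=
    mod_cancel (by rw [Ef_const 2 s (by omega)]; norm_num) step1
  have step3 : X^s ∣ Ef 2 N * G (2*N) k - 1 := by
    have e : Ef 2 N * G (2*N) k - 1
        = (Ef 2 N - Ef 2 s) * G (2*N) k + (Ef 2 s * G (2*N) k - 1) := by ring
    rw [e]
    exact dvd_add (c4.mul_right _) step2
  exact dvd_sub_comm.mp step3

lemma theta_cong (m N : ℕ) (hN : m + 1 ≤ N) :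
    X ^ (m+1) ∣ (∑ k ∈ range (2*N+1), X ^ (dsq k N)) - Ef 2 N * Fplus N ^ 2 := by
  rw [Fplus_sq, SS, Finset.mul_sum, ← Finset.sum_sub_distrib]
  apply Finset.dvd_sum
  intro k hk
  have hk' : k ≤ 2*N := by have := Finset.mem_range.mp hk; omega
  have e : (X : R) ^ dsq k N - Ef 2 N * (G (2*N) k * X ^ (dsq k N))
      = (1 - Ef 2 N * G (2*N) k) * X ^ (dsq k N) := by ring
  rw [e]
  rcases le_or_gt (dsq k N) m with h | h
  · have h1 := key_cong m N k hN hk' h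
    have h2 := mul_dvd_mul h1 (dvd_refl ((X : R) ^ (dsq k N)))
    rw [← pow_add, show m + 1 - dsq k N + dsq k N = m + 1 by omega] at h2
    exact h2
  · exact Dvd.dvd.mul_left (pow_dvd_pow X (by omega)) _

def Fodd (N : ℕ) : R := ∏ n ∈ range N, (1 - X ^ (2 * n + 1))

def Fodd2 (N : ℕ) : R := ∏ n ∈ range N, (1 - X ^ (4 * n + 2))

lemma split12 (N : ℕ) : Ef 1 (2*N) = Ef 2 N * Fodd N := by
  induction N with
  | zero => simp [Ef_zero, Fodd]
  | succ N ih =>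
    rw [show 2*(N+1) = (2*N+1)+1 by ring, Ef_succ, show 2*N+1 = (2*N)+1 from rfl, Ef_succ,
      Ef_succ, Fodd, Finset.prod_range_succ, ← Fodd, ih]
    ring
lemma split24 (N : ℕ) : Ef 2 (2*N) = Ef 4 N * Fodd2 N := by
  induction N with
  | zero => simp [Ef_zero, Fodd2]
  | succ N ih =>
    rw [show 2*(N+1) = (2*N+1)+1 by ring, Ef_succ, show 2*N+1 = (2*N)+1 from rfl, Ef_succ,
      Ef_succ, Fodd2, Finset.prod_range_succ, ← Fodd2, ih]
    ring
lemma oddsplit (N : ℕ) : Fodd2 N = Fodd N * Fplus N := by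
  rw [Fodd2, Fodd, Fplus, ← Finset.prod_mul_distrib]
  apply Finset.prod_congr rfl
  intro n _
  ring

lemma mod_pow {s : ℕ} {P Q : R} (h : X^s ∣ P - Q) (n : ℕ) : X^s ∣ P^n - Q^n := by
  induction n with
  | zero => simp
  | succ n ih =>
    rw [pow_succ, pow_succ]
    exact mod_mul ih h

lemma etaQ_cong (δ m M : ℕ) (hδ : 1 ≤ δ) (hM : m + 1 ≤ M) :
    X^(m+1) ∣ etaQ δ - Ef δ M := by
  rw [X_pow_dvd_iff]
  intro i hi
  rw [map_sub, etaQ, coeff_mk]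
  have h1 : (coeff i) (∏ n ∈ Finset.range (i + 1), (1 - X ^ (δ * (n + 1))))
      = coeff i (Ef δ (i+1)) := rfl
  have h2 : coeff i (Ef δ M) - coeff i (Ef δ (i+1)) = 0 := by
    rw [← map_sub]
    have := Ef_stab δ hδ (show i + 1 ≤ M by omega)
    rw [X_pow_dvd_iff] at this
    exact this i (by omega)
  rw [h1]
  linarith [h2]

lemma theta_sum_cong (m N : ℕ) (hN : m + 1 ≤ N) :
    X ^ (m+1) ∣ theta - ∑ k ∈ range (2*N+1), X ^ dsq k N := by
  rw [X_pow_dvd_iff]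
  intro i hi
  rw [map_sub, theta, coeff_mk, map_sum]
  have hiN : i < N := by omega
  have hsum : ∑ k ∈ range (2*N+1), (coeff i) ((X : R) ^ dsq k N)
      = (((range (2*N+1)).filter (fun k => i = dsq k N)).card : ℚ) := by
    rw [Finset.sum_congr rfl (fun k _ => coeff_X_pow i (dsq k N)), Finset.sum_boole]
  have inj : Function.Injective (fun k : ℕ => (k : ℤ) - (N : ℤ)) := by
    intro a b hab
    simp only at hab
    omega
  have hset : {n : ℤ | n ^ 2 = (i : ℤ)}
      = ↑((((range (2*N+1)).filter (fun k => i = dsq k N)).image (fun k : ℕ => (k : ℤ) - (N : ℤ)))) := by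
    ext n
    simp only [Set.mem_setOf_eq, Finset.coe_image, Set.mem_image, Finset.mem_coe,
      Finset.mem_filter, Finset.mem_range]
    constructor
    · intro h
      have h1 : n.natAbs ^ 2 = i := by
        have h0 := congrArg Int.natAbs h
        simpa [Int.natAbs_pow] using h0
      have h2 : n.natAbs ≤ i := h1 ▸ Nat.le_self_pow two_ne_zero _
      have h3 : n.natAbs < N := by omega
      refine ⟨(n + N).toNat, ⟨by omega, ?_⟩, by omega⟩
      have h4 : (((n + N).toNat : ℕ) : ℤ) = n + N := by omega
      have h5 := dsq_cast ((n+N).toNat) N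
      rw [h4] at h5
      have h6 : (dsq ((n+N).toNat) N : ℤ) = (i : ℤ) := by
        rw [h5]
        linear_combination h
      exact_mod_cast h6.symm
    · rintro ⟨k, ⟨hk1, hk2⟩, rfl⟩
      have h5 := dsq_cast k N
      have h6 : ((dsq k N : ℕ) : ℤ) = (i : ℤ) := by exact_mod_cast congrArg (Nat.cast : ℕ → ℤ) hk2.symm
      linear_combination h5.symm + h6
  rw [hset, Set.ncard_coe_finset, Finset.card_image_of_injective _ inj, hsum]
  ring

lemma etaQ_const (δ : ℕ) (hδ : 1 ≤ δ) : constantCoeff (etaQ δ) = 1 := by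
  have h1 : constantCoeff (etaQ δ) = coeff 0 (etaQ δ) := by
    rw [coeff_zero_eq_constantCoeff]
  rw [h1, etaQ, coeff_mk]
  have h2 : (coeff 0) (∏ n ∈ Finset.range (0 + 1), (1 - X ^ (δ * (n + 1))))
      = constantCoeff (Ef δ 1) := by
    rw [coeff_zero_eq_constantCoeff]
    rfl
  rw [h2, Ef_const δ 1 hδ]

lemma main_L : theta * (etaQ 1 ^ 2 * etaQ 4 ^ 2) = etaQ 2 ^ 5 := by
  apply PowerSeries.ext
  intro m
  have key : X^(m+1) ∣ theta * (etaQ 1 ^ 2 * etaQ 4 ^ 2) - etaQ 2 ^ 5 := by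
    set N := m + 1 with hNdef
    set s := m + 1 with hs
    have d1 : X^s ∣ etaQ 1 - Ef 1 (2*N) := etaQ_cong 1 m (2*N) (by omega) (by omega)
    have d2 : X^s ∣ etaQ 2 - Ef 2 N := etaQ_cong 2 m N (by omega) (by omega)
    have d4 : X^s ∣ etaQ 4 - Ef 4 N := etaQ_cong 4 m N (by omega) (by omega)
    have dth : X^s ∣ theta - ∑ k ∈ range (2*N+1), X ^ dsq k N := theta_sum_cong m N (by omega)
    have dk : X^s ∣ (∑ k ∈ range (2*N+1), X ^ dsq k N) - Ef 2 N * Fplus N ^ 2 :=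
      theta_cong m N (by omega)
    have dthk : X^s ∣ theta - Ef 2 N * Fplus N ^ 2 := by
      have := dvd_add dth dk
      rwa [sub_add_sub_cancel] at this
    have d5 : X^s ∣ Ef 2 (2*N) - Ef 2 N := Ef_stab' 2 (by omega) (by omega) (by omega)
    have t1 : X^s ∣ theta * (etaQ 1 ^ 2 * etaQ 4 ^ 2)
        - (Ef 2 N * Fplus N ^ 2) * (Ef 1 (2*N) ^ 2 * Ef 4 N ^ 2) :=
      mod_mul dthk (mod_mul (mod_pow d1 2) (mod_pow d4 2))
    have t2 : (Ef 2 N * Fplus N ^ 2) * (Ef 1 (2*N) ^ 2 * Ef 4 N ^ 2)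
        = Ef 2 N ^ 3 * Ef 2 (2*N) ^ 2 := by
      rw [split12, split24, oddsplit]
      ring
    have t3 : X^s ∣ Ef 2 N ^ 3 * Ef 2 (2*N) ^ 2 - etaQ 2 ^ 5 := by
      have h1 : X^s ∣ Ef 2 N ^ 3 * Ef 2 (2*N) ^ 2 - Ef 2 N ^ 3 * Ef 2 N ^ 2 :=
        mod_mul (by simp) (mod_pow d5 2)
      have h2 : X^s ∣ Ef 2 N ^ 5 - etaQ 2 ^ 5 := mod_pow (dvd_sub_comm.mp d2) 5
      have := dvd_add h1 h2
      have e : Ef 2 N ^ 3 * Ef 2 (2*N) ^ 2 - Ef 2 N ^ 3 * Ef 2 N ^ 2 + (Ef 2 N ^ 5 - etaQ 2 ^ 5)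
          = Ef 2 N ^ 3 * Ef 2 (2*N) ^ 2 - etaQ 2 ^ 5 := by ring
      rwa [e] at this
    have := dvd_add t1 t3
    rw [t2, sub_add_sub_cancel] at this
    exact this
  rw [X_pow_dvd_iff] at key
  have := key m (by omega)
  rw [map_sub] at this
  linarith [this]

end AuxTheta

/-- `θ(q)² = η(q²)^10 / (η(q)^4 η(q⁴)^4)` as formal power series. -/
theorem theta_sq_eq_eta_quotient :
    theta ^ 2 = etaQ 2 ^ 10 * (etaQ 1 ^ 4 * etaQ 4 ^ 4)⁻¹ := by
  have hconst : constantCoeff (etaQ 1 ^ 4 * etaQ 4 ^ 4) ≠ 0 := by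
    rw [map_mul, map_pow, map_pow, etaQ_const 1 (by omega), etaQ_const 4 (by omega)]
    norm_num
  rw [PowerSeries.eq_mul_inv_iff_mul_eq hconst]
  linear_combination (theta * (etaQ 1 ^ 2 * etaQ 4 ^ 2) + etaQ 2 ^ 5) * main_L
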